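/- Scalar C-D-J bound via probability measure: let μ be a probability measure on [m,M], f twice differentiable with α ≤ f'' ≤ β on [m,M], and let E[X] = ∫t dμ, E[f(X)] = ∫f dμ, E[X²] = ∫t² dμ. Then f(E[X]) ≤ E[f(X)] + ((β-α)/2)·((M+m)E[X] - Mm) + (1/2)·(α·E[X]² - β·E[X²]). -/

import Mathlib

open MeasureTheory

/-- Scalar Choi-Davis-Jensen bound via a probability measure supported in `[m, M]`:
`f (E[X]) ≤ E[f X] + ((β-α)/2) * ((M+m) E[X] - M m) + (1/2) * (α E[X]^2 - β E[X^2])`. -/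
theorem scalar_CDJ_bound (m M α β : ℝ) (hmM : m < M)
    (μ : Measure ℝ) [IsProbabilityMeasure μ] (hsupp : μ (Set.Icc m M)ᶜ = 0)
    (f : ℝ → ℝ)
    (hf : ∀ x, HasDerivAt f (deriv f x) x)
    (hf' : ∀ x, HasDerivAt (deriv f) (deriv (deriv f) x) x)
    (hαβ : ∀ x ∈ Set.Icc m M,
      α ≤ deriv (deriv f) x ∧ deriv (deriv f) x ≤ β) :
    f (∫ t, t ∂μ)
      ≤ (∫ t, f t ∂μ) + ((β - α) / 2) * ((M + m) * (∫ t, t ∂μ) - M * m)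
          + (1 / 2) * (α * (∫ t, t ∂μ) ^ 2 - β * (∫ t, t ^ 2 ∂μ)) := by
  have hae : ∀ᵐ x ∂μ, x ∈ Set.Icc m M := by
    rw [ae_iff]
    exact hsupp
  have hfc : Continuous f := continuous_iff_continuousAt.2 fun x => (hf x).continuousAt
  have key : ∀ g : ℝ → ℝ, Continuous g → Integrable g μ := by
    intro g hg
    obtain ⟨C, hC⟩ :=
      (isCompact_Icc : IsCompact (Set.Icc m M)).exists_bound_of_continuousOn hg.continuousOn
    exact Integrable.mono' (integrable_const C) hg.aestronglyMeasurable
      (hae.mono fun x hx => hC x hx)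
  have hαle : α ≤ β := by
    have hm := hαβ m ⟨le_refl m, hmM.le⟩
    linarith [hm.1, hm.2]
  -- second moment bound
  have hmom : (∫ t, t ^ 2 ∂μ) ≤ (M + m) * (∫ t, t ∂μ) - M * m := by
    have h1 : (∫ t, t ^ 2 ∂μ) ≤ ∫ t, ((M + m) * t - M * m) ∂μ := by
      apply integral_mono_ae (key _ (by continuity)) (key _ (by continuity))
      exact hae.mono fun x hx => by
        show x ^ 2 ≤ (M + m) * x - M * m
        nlinarith [hx.1, hx.2]
    rwa [integral_sub (by exact (key _ (by continuity)))
        (integrable_const _), integral_const_mul, integral_const, probReal_univ,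
        smul_eq_mul, one_mul,
        show (∫ t, t ∂μ) = (∫ t, id t ∂μ) from rfl] at h1
  -- the convex auxiliary function
  set g : ℝ → ℝ := fun x => f x - α / 2 * x ^ 2 with hgdef
  have hg1 : ∀ x, HasDerivAt g (deriv f x - α * x) x := by
    intro x
    have h2 : HasDerivAt (fun x : ℝ => α / 2 * x ^ 2) (α * x) x := by
      have := (hasDerivAt_pow 2 x).const_mul (α / 2)
      exact this.congr_deriv (by ring)
    exact (hf x).sub h2
  have hderivg : deriv g = fun x => deriv f x - α * x := funext fun x => (hg1 x).deriv
  have hg2 : ∀ x, HasDerivAt (deriv g) (deriv (deriv f) x - α) x := by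
    intro x
    rw [hderivg]
    have h2 : HasDerivAt (fun x : ℝ => α * x) α x := by
      simpa using (hasDerivAt_id x).const_mul α
    exact (hf' x).sub h2
  have hgc : Continuous g := continuous_iff_continuousAt.2 fun x => (hg1 x).continuousAt
  have hgconv : ConvexOn ℝ (Set.Icc m M) g := by
    apply convexOn_of_deriv2_nonneg (convex_Icc m M) hgc.continuousOn
      (fun x _ => (hg1 x).differentiableAt.differentiableWithinAt)
      (fun x _ => (hg2 x).differentiableAt.differentiableWithinAt)
    intro x hx
    have hxm : x ∈ Set.Icc m M := interior_subset hx
    have : deriv^[2] g x = deriv (deriv g) x := by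
      simp [Function.iterate_succ, Function.comp]
    rw [this, (hg2 x).deriv]
    linarith [(hαβ x hxm).1]
  -- Jensen
  have hjen : g (∫ x, x ∂μ) ≤ ∫ x, g x ∂μ := by
    have := hgconv.map_integral_le hgc.continuousOn isClosed_Icc hae
      (key _ continuous_id) (key _ (by exact hgc))
    simpa using this
  have hexp : (∫ x, g x ∂μ) = (∫ t, f t ∂μ) - α / 2 * (∫ t, t ^ 2 ∂μ) := by
    rw [hgdef]
    rw [integral_sub (key f hfc) (by exact (key _ (by continuity))), integral_const_mul]
  rw [hexp] at hjen
  have hg3 : g (∫ x, x ∂μ) = f (∫ t, t ∂μ) - α / 2 * (∫ t, t ∂μ) ^ 2 := rfl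
  rw [hg3] at hjen
  nlinarith [mul_le_mul_of_nonneg_left hmom (by linarith : (0:ℝ) ≤ (β - α) / 2)]
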